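/- Let μ be a ℤ^p-invariant regular Borel probability measure on Ω, let h be a ℤ^p-equivariant continuous function h : Ω × ℝ^p → ℝ (i.e. h(n•ω, x) = h(ω, x + n) for all n ∈ ℤ^p), and let χ' : ℝ^p → ℝ be any continuous compactly supported function satisfying Σ_{n ∈ ℤ^p} χ'(x + n) = 1 for all x ∈ ℝ^p. Then ∫_Ω ∫_{ℝ^p} χ'(x) h(ω, x) dx dμ(ω) = ∫_Ω ∫_{[0,1]^p} h(ω, x) dx dμ(ω). (This expresses that the Ruelle–Sullivan pairing C_{μ,ℤ^p} is independent of the choice of the cut-off function implementing a fundamental domain of the ℤ^p-action on ℝ^p.) -/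

import Mathlib

open MeasureTheory

noncomputable section

/-- Coercion of a lattice point `n ∈ ℤ^p` to a vector in `ℝ^p`. -/
def latCoe {p : ℕ} (n : Fin p → ℤ) : Fin p → ℝ := fun i => (n i : ℝ)

/-- A bounded a.e. strongly measurable function is integrable on a set of finite measure. -/
lemma aux_integrableOn {α : Type*} [MeasurableSpace α] {μ : Measure α} {f : α → ℝ}
    (hf : AEStronglyMeasurable f μ) {s : Set α} (hs : MeasurableSet s) (hμs : μ s < ⊤)
    {C : ℝ} (hC : ∀ x ∈ s, |f x| ≤ C) : IntegrableOn f s μ := by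
  haveI : IsFiniteMeasure (μ.restrict s) := ⟨by rwa [Measure.restrict_apply_univ]⟩
  refine ⟨hf.restrict, HasFiniteIntegral.of_bounded (C := C) ?_⟩
  filter_upwards [ae_restrict_mem hs] with x hx
  simpa [Real.norm_eq_abs] using hC x hx

theorem stmt5 {p : ℕ} (hp : 1 ≤ p) (Ω : Type*) [TopologicalSpace Ω] [CompactSpace Ω]
    [TopologicalSpace.MetrizableSpace Ω] [TotallyDisconnectedSpace Ω] [Nonempty Ω] [PerfectSpace Ω]
    [MeasurableSpace Ω] [BorelSpace Ω]
    (act : (Fin p → ℤ) → Ω → Ω)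
    (hact_zero : ∀ ω, act 0 ω = ω)
    (hact_add : ∀ m n ω, act (m + n) ω = act m (act n ω))
    (hact_cont : ∀ n, Continuous (act n))
    (μ : Measure Ω) [IsProbabilityMeasure μ] [μ.Regular]
    (hinv : ∀ (n : Fin p → ℤ) (A : Set Ω), MeasurableSet A → μ (act n ⁻¹' A) = μ A)
    (h : Ω → (Fin p → ℝ) → ℝ)
    (hcont : Continuous (fun q : Ω × (Fin p → ℝ) => h q.1 q.2))
    (hequiv : ∀ (n : Fin p → ℤ) (ω : Ω) (x : Fin p → ℝ), h (act n ω) x = h ω (x + latCoe n))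
    (χ' : (Fin p → ℝ) → ℝ) (hχcont : Continuous χ') (hχsupp : HasCompactSupport χ')
    (hχsum : ∀ x : Fin p → ℝ, ∑' n : Fin p → ℤ, χ' (x + latCoe n) = 1) :
    ∫ ω, (∫ x, χ' x * h ω x) ∂μ = ∫ ω, (∫ x in Set.Icc (0 : Fin p → ℝ) 1, h ω x) ∂μ := by
  classical
  -- basic continuity/measurability facts
  have hcont_x : ∀ x : Fin p → ℝ, Continuous fun ω => h ω x := fun x =>
    hcont.comp (continuous_id.prodMk continuous_const)
  have hmeas_act : ∀ n, Measurable (act n) := fun n => (hact_cont n).measurable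
  have hmap : ∀ n, Measure.map (act n) μ = μ := by
    intro n
    ext A hA
    rw [Measure.map_apply (hmeas_act n) hA]
    exact hinv n A hA
  set H : (Fin p → ℝ) → ℝ := fun x => ∫ ω, h ω x ∂μ with hHdef
  -- H is periodic
  have hHper : ∀ (n : Fin p → ℤ) (x : Fin p → ℝ), H (x + latCoe n) = H x := by
    intro n x
    have h1 : H (x + latCoe n) = ∫ ω, h (act n ω) x ∂μ := by
      simp only [hHdef]
      exact integral_congr_ae (Filter.Eventually.of_forall fun ω => (hequiv n ω x).symm)
    have h2 : ∫ y, h y x ∂(Measure.map (act n) μ) = ∫ ω, h (act n ω) x ∂μ :=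
      integral_map (hmeas_act n).aemeasurable (hcont_x x).aestronglyMeasurable
    rw [h1, ← h2, hmap n]
  -- H is strongly measurable
  have hHsm : StronglyMeasurable H := by
    have : StronglyMeasurable fun q : (Fin p → ℝ) × Ω => h q.2 q.1 :=
      (hcont.comp (continuous_snd.prodMk continuous_fst)).stronglyMeasurable
    exact this.integral_prod_right'
  -- H is bounded on compact sets
  have hHbound : ∀ K : Set (Fin p → ℝ), IsCompact K → ∃ C : ℝ, ∀ x ∈ K, |H x| ≤ C := by
    intro K hK
    obtain ⟨C, hC⟩ :=
      (isCompact_univ.prod hK).exists_bound_of_continuousOn hcont.continuousOn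
    refine ⟨C, fun x hx => ?_⟩
    have hb : ‖∫ ω, h ω x ∂μ‖ ≤ C * (μ Set.univ).toReal :=
      norm_integral_le_of_norm_le_const
        (Filter.Eventually.of_forall fun ω => hC (ω, x) ⟨trivial, hx⟩)
    simpa [Real.norm_eq_abs, measure_univ] using hb
  -- Fubini for the left-hand side
  have hFint : Integrable (Function.uncurry fun ω (x : Fin p → ℝ) => χ' x * h ω x)
      (μ.prod volume) := by
    have hc : Continuous (Function.uncurry fun ω (x : Fin p → ℝ) => χ' x * h ω x) :=
      (hχcont.comp continuous_snd).mul hcont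
    refine hc.integrable_of_hasCompactSupport ?_
    refine HasCompactSupport.intro (isCompact_univ.prod hχsupp) fun q hq => ?_
    have hq2 : q.2 ∉ tsupport χ' := fun hm => hq ⟨trivial, hm⟩
    simp [Function.uncurry, image_eq_zero_of_notMem_tsupport hq2]
  have hLHS : ∫ ω, (∫ x, χ' x * h ω x) ∂μ = ∫ x, χ' x * H x := by
    rw [integral_integral_swap hFint]
    exact integral_congr_ae (Filter.Eventually.of_forall fun x => integral_const_mul _ _)
  -- Fubini for the right-hand side
  have hRHSint : Integrable (Function.uncurry h)
      (μ.prod (volume.restrict (Set.Icc (0 : Fin p → ℝ) 1))) := by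
    have hre := Measure.prod_restrict (μ := μ) (ν := (volume : Measure (Fin p → ℝ)))
      Set.univ (Set.Icc (0 : Fin p → ℝ) 1)
    rw [Measure.restrict_univ] at hre
    rw [hre]
    exact hcont.continuousOn.integrableOn_compact (isCompact_univ.prod isCompact_Icc)
  have hRHS : ∫ ω, (∫ x in Set.Icc (0 : Fin p → ℝ) 1, h ω x) ∂μ
      = ∫ x in Set.Icc (0 : Fin p → ℝ) 1, H x := integral_integral_swap hRHSint
  -- setup for the core computation
  obtain ⟨R, hR⟩ := hχsupp.isBounded.subset_closedBall 0
  have hRnorm : ∀ y ∈ tsupport χ', ∀ i, |y i| ≤ R := by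
    intro y hy i
    have h1 : ‖y‖ ≤ R := by simpa [dist_zero_right] using (Metric.mem_closedBall.1 (hR hy))
    calc |y i| = ‖y i‖ := (Real.norm_eq_abs _).symm
      _ ≤ ‖y‖ := norm_le_pi_norm y i
      _ ≤ R := h1
  obtain ⟨M, hM⟩ : ∃ M : ℕ, R + 1 ≤ M := exists_nat_ge (R + 1)
  set S : Finset (Fin p → ℤ) := Finset.Icc (fun _ => -(M : ℤ)) (fun _ => (M : ℤ)) with hS
  set B : Set (Fin p → ℝ) := Set.univ.pi (fun _ => Set.Ico (0 : ℝ) 1) with hBdef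
  have hBmeas : MeasurableSet B := MeasurableSet.univ_pi fun _ => measurableSet_Ico
  have hBmem : ∀ x : Fin p → ℝ, x ∈ B ↔ ∀ i, 0 ≤ x i ∧ x i < 1 := by
    intro x; simp [hBdef, Set.mem_pi]
  set T : (Fin p → ℤ) → Set (Fin p → ℝ) := fun n => (fun x => x + -latCoe n) ⁻¹' B with hTdef
  have hTmeas : ∀ n, MeasurableSet (T n) := fun n =>
    hBmeas.preimage (measurable_id.add_const _)
  have hTmem : ∀ (n : Fin p → ℤ) (y : Fin p → ℝ),
      y ∈ T n ↔ ∀ i, (n i : ℝ) ≤ y i ∧ y i < n i + 1 := by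
    intro n y
    rw [hTdef]
    simp only [Set.mem_preimage, hBmem, Pi.add_apply, Pi.neg_apply, latCoe]
    constructor
    · intro hy i
      obtain ⟨h1, h2⟩ := hy i
      constructor <;> linarith
    · intro hy i
      obtain ⟨h1, h2⟩ := hy i
      constructor <;> linarith
  have himg : ∀ n, (fun x => x + latCoe n) '' B = T n := by
    intro n
    rw [hTdef]
    exact Set.image_add_right
  -- translation invariance of the set integral
  have htrans : ∀ (n : Fin p → ℤ) (g : (Fin p → ℝ) → ℝ),
      ∫ y in T n, g y = ∫ x in B, g (x + latCoe n) := by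
    intro n g
    rw [← himg n]
    exact (measurePreserving_add_right volume (latCoe n)).setIntegral_image_emb
      (measurableEmbedding_addRight _) g B
  have hvolB : volume B = 1 := by
    rw [hBdef, volume_pi_pi]
    simp [Real.volume_Ico]
  have hvolT : ∀ n, volume (T n) = 1 := by
    intro n
    rw [hTdef]
    rw [measure_preimage_add_right volume (-latCoe n) B]
    exact hvolB
  -- nonvanishing forces membership in S
  have hSmem : ∀ x ∈ B, ∀ n : Fin p → ℤ, χ' (x + latCoe n) ≠ 0 → n ∈ S := by
    intro x hx n hne
    have hmem : x + latCoe n ∈ tsupport χ' := subset_tsupport χ' hne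
    rw [hS, Finset.mem_Icc]
    constructor <;> (rw [Pi.le_def]; intro i)
    · have h1 := hRnorm _ hmem i
      have h2 := (hBmem x).1 hx i
      have h3 : |x i + (n i : ℝ)| ≤ R := by simpa [latCoe] using h1
      have : -(M : ℝ) ≤ (n i : ℝ) := by
        have := abs_le.1 h3
        have hM' : R + 1 ≤ (M : ℝ) := hM
        linarith [h2.1, h2.2]
      exact_mod_cast this
    · have h1 := hRnorm _ hmem i
      have h2 := (hBmem x).1 hx i
      have h3 : |x i + (n i : ℝ)| ≤ R := by simpa [latCoe] using h1
      have : (n i : ℝ) ≤ (M : ℝ) := by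
        have := abs_le.1 h3
        have hM' : R + 1 ≤ (M : ℝ) := hM
        linarith [h2.1, h2.2]
      exact_mod_cast this
  -- the translates of B by S cover the support of χ'
  have hcover : tsupport χ' ⊆ ⋃ n ∈ S, T n := by
    intro y hy
    refine Set.mem_iUnion₂.2 ⟨fun i => ⌊y i⌋, ?_, ?_⟩
    · rw [hS, Finset.mem_Icc]
      constructor <;> (rw [Pi.le_def]; intro i)
      · have h1 := hRnorm _ hy i
        have := abs_le.1 h1
        have hM' : R + 1 ≤ (M : ℝ) := hM
        have : -(M : ℝ) ≤ y i := by linarith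
        have h2 : ((-(M : ℤ) : ℤ) : ℝ) ≤ y i := by push_cast; linarith
        exact Int.le_floor.2 h2
      · have h1 := hRnorm _ hy i
        have := abs_le.1 h1
        have hM' : R + 1 ≤ (M : ℝ) := hM
        have h2 : (⌊y i⌋ : ℝ) ≤ (M : ℝ) := le_trans (Int.floor_le _) (by linarith)
        exact_mod_cast h2
    · rw [hTmem]
      intro i
      exact ⟨Int.floor_le _, Int.lt_floor_add_one _⟩
  -- the translates are pairwise disjoint
  have hdisj : (↑S : Set (Fin p → ℤ)).Pairwise (Function.onFun Disjoint T) := by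
    intro m _ n _ hmn
    refine Set.disjoint_left.2 fun y hym hyn => hmn ?_
    funext i
    have h1 := (hTmem m y).1 hym i
    have h2 := (hTmem n y).1 hyn i
    have ha : (m i : ℝ) < n i + 1 := lt_of_le_of_lt h1.1 h2.2
    have hb : (n i : ℝ) < m i + 1 := lt_of_le_of_lt h2.1 h1.2
    have ha' : m i < n i + 1 := by exact_mod_cast ha
    have hb' : n i < m i + 1 := by exact_mod_cast hb
    omega
  -- bounds
  obtain ⟨Cχ₀, hCχ₀⟩ := hχsupp.exists_bound_of_continuousOn hχcont.continuousOn
  set Cχ : ℝ := max Cχ₀ 0 with hCχdef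
  have hCχ0 : 0 ≤ Cχ := le_max_right _ _
  have hCχ : ∀ x, |χ' x| ≤ Cχ := by
    intro x
    by_cases hx : x ∈ tsupport χ'
    · exact le_trans (by simpa [Real.norm_eq_abs] using hCχ₀ x hx) (le_max_left _ _)
    · rw [image_eq_zero_of_notMem_tsupport hx, abs_zero]
      exact hCχ0
  have hTsub : ∀ n, T n ⊆ Set.Icc (latCoe n) (latCoe n + 1) := by
    intro n y hy
    rw [Set.mem_Icc]
    constructor <;> (rw [Pi.le_def]; intro i)
    · exact ((hTmem n y).1 hy i).1
    · simpa [latCoe] using le_of_lt ((hTmem n y).1 hy i).2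
  have hBsub : B ⊆ Set.Icc (0 : Fin p → ℝ) 1 := by
    intro x hx
    rw [Set.mem_Icc]
    constructor <;> (rw [Pi.le_def]; intro i)
    · exact ((hBmem x).1 hx i).1
    · simpa using le_of_lt ((hBmem x).1 hx i).2
  -- integrability of the summands
  have hsm : AEStronglyMeasurable (fun x => χ' x * H x) (volume : Measure (Fin p → ℝ)) :=
    (hχcont.stronglyMeasurable.mul hHsm).aestronglyMeasurable
  have hTint : ∀ n ∈ S, IntegrableOn (fun x => χ' x * H x) (T n) volume := by
    intro n _
    obtain ⟨C, hC⟩ := hHbound (Set.Icc (latCoe n) (latCoe n + 1)) isCompact_Icc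
    refine aux_integrableOn hsm (hTmeas n) (by rw [hvolT n]; exact ENNReal.one_lt_top)
      (C := Cχ * C) fun x hx => ?_
    rw [abs_mul]
    exact mul_le_mul (hCχ x) (hC x (hTsub n hx)) (abs_nonneg _)
      hCχ0
  obtain ⟨CB, hCB⟩ := hHbound (Set.Icc (0 : Fin p → ℝ) 1) isCompact_Icc
  have hBint : ∀ n ∈ S, Integrable (fun x => χ' (x + latCoe n) * H x)
      (volume.restrict B) := by
    intro n _
    have hsm' : AEStronglyMeasurable (fun x : Fin p → ℝ => χ' (x + latCoe n) * H x)
        (volume : Measure (Fin p → ℝ)) :=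
      ((hχcont.comp (continuous_id.add continuous_const)).stronglyMeasurable.mul
        hHsm).aestronglyMeasurable
    refine aux_integrableOn hsm' hBmeas (by rw [hvolB]; exact ENNReal.one_lt_top)
      (C := Cχ * CB) fun x hx => ?_
    rw [abs_mul]
    exact mul_le_mul (hCχ _) (hCB x (hBsub hx)) (abs_nonneg _) hCχ0
  -- B agrees with the closed cube almost everywhere
  have hBIcc : B =ᵐ[(volume : Measure (Fin p → ℝ))] Set.Icc (0 : Fin p → ℝ) 1 := by
    have hvolIcc : volume (Set.Icc (0 : Fin p → ℝ) 1) = 1 := by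
      rw [← Set.pi_univ_Icc, volume_pi_pi]
      simp [Real.volume_Icc]
    have hd : volume (Set.Icc (0 : Fin p → ℝ) 1 \ B) = 0 := by
      rw [measure_diff hBsub hBmeas.nullMeasurableSet (by rw [hvolB]; exact ENNReal.one_ne_top)]
      rw [hvolB, hvolIcc, tsub_self]
    refine ae_eq_set.2 ⟨?_, hd⟩
    rw [Set.diff_eq_empty.2 hBsub]
    exact measure_empty
  -- the core computation
  have hcore : ∫ x, χ' x * H x = ∫ x in Set.Icc (0 : Fin p → ℝ) 1, H x := by
    calc ∫ x, χ' x * H x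
        = ∫ x in ⋃ n ∈ S, T n, χ' x * H x := by
          refine (setIntegral_eq_integral_of_forall_compl_eq_zero fun x hx => ?_).symm
          have hz : χ' x = 0 := by
            by_contra hne
            exact hx (hcover (subset_tsupport χ' hne))
          rw [hz, zero_mul]
      _ = ∑ n ∈ S, ∫ x in T n, χ' x * H x :=
          integral_biUnion_finset S (fun n _ => hTmeas n) hdisj hTint
      _ = ∑ n ∈ S, ∫ x in B, χ' (x + latCoe n) * H (x + latCoe n) :=
          Finset.sum_congr rfl fun n _ => htrans n _
      _ = ∑ n ∈ S, ∫ x in B, χ' (x + latCoe n) * H x := by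
          refine Finset.sum_congr rfl fun n _ => ?_
          refine integral_congr_ae (Filter.Eventually.of_forall fun x => ?_)
          show χ' (x + latCoe n) * H (x + latCoe n) = χ' (x + latCoe n) * H x
          rw [hHper]
      _ = ∫ x in B, ∑ n ∈ S, χ' (x + latCoe n) * H x := (integral_finset_sum S hBint).symm
      _ = ∫ x in B, H x := by
          refine setIntegral_congr_fun hBmeas fun x hx => ?_
          rw [← Finset.sum_mul]
          have hsum : ∑ n ∈ S, χ' (x + latCoe n) = 1 := by
            rw [← hχsum x]
            exact (tsum_eq_sum fun n hn => by
              by_contra hne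
              exact hn (hSmem x hx n hne)).symm
          rw [hsum, one_mul]
      _ = ∫ x in Set.Icc (0 : Fin p → ℝ) 1, H x := setIntegral_congr_set hBIcc
  rw [hLHS, hRHS]
  exact hcore
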